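/- For any positive random variable V with continuous CDF F, the expected revenue of a seller who draws a random price P distributed as V (independent of nothing else: i.e., E[P·(1-F(P))] where P ~ F) is at least (1/e)·exp(E[log V]). -/

import Mathlib

open MeasureTheory Set

private lemma ofReal_max_zero' (x : ℝ) : ENNReal.ofReal (max x 0) = ENNReal.ofReal x := by
  rcases le_total x 0 with h | h
  · rw [max_eq_right h, ENNReal.ofReal_zero, eq_comm, ENNReal.ofReal_eq_zero]
    exact h
  · rw [max_eq_left h]

/-- Jensen's inequality for `exp`, lintegral form. -/
private lemma jensen_exp {Ω : Type*} [MeasurableSpace Ω] (μ : Measure Ω)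
    [IsProbabilityMeasure μ] (g : Ω → ℝ) (hg : Integrable g μ) :
    ENNReal.ofReal (Real.exp (∫ ω, g ω ∂μ)) ≤ ∫⁻ ω, ENNReal.ofReal (Real.exp (g ω)) ∂μ := by
  set m := ∫ ω, g ω ∂μ with hm
  have key : ∀ ω, max (Real.exp m * (g ω - m + 1)) 0 ≤ Real.exp (g ω) := by
    intro ω
    refine max_le ?_ (Real.exp_pos _).le
    have h1 := Real.add_one_le_exp (g ω - m)
    calc Real.exp m * (g ω - m + 1) ≤ Real.exp m * Real.exp (g ω - m) :=
          mul_le_mul_of_nonneg_left h1 (Real.exp_pos m).le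
      _ = Real.exp (g ω) := by rw [← Real.exp_add]; ring_nf
  have haff : Integrable (fun ω => Real.exp m * (g ω - m + 1)) μ :=
    ((hg.sub (integrable_const m)).add (integrable_const 1)).const_mul _
  have hφ : Integrable (fun ω => max (Real.exp m * (g ω - m + 1)) 0) μ := haff.pos_part
  have hI : ∫ ω, Real.exp m * (g ω - m + 1) ∂μ = Real.exp m := by
    rw [integral_const_mul]
    have h2 : ∫ a, (g a - m + 1) ∂μ = 1 := by
      have e : ∀ a, g a - m + 1 = g a + (1 - m) := fun a => by ring
      simp_rw [e]
      rw [integral_add hg (integrable_const _), integral_const]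
      simp [← hm]
    rw [h2, mul_one]
  calc ENNReal.ofReal (Real.exp m)
      = ENNReal.ofReal (∫ ω, Real.exp m * (g ω - m + 1) ∂μ) := by rw [hI]
    _ ≤ ENNReal.ofReal (∫ ω, max (Real.exp m * (g ω - m + 1)) 0 ∂μ) := by
        apply ENNReal.ofReal_le_ofReal
        exact integral_mono haff hφ fun ω => le_max_left _ _
    _ = ∫⁻ ω, ENNReal.ofReal (max (Real.exp m * (g ω - m + 1)) 0) ∂μ :=
        ofReal_integral_eq_lintegral_ofReal hφ (Filter.Eventually.of_forall fun ω =>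
          le_max_right _ _)
    _ ≤ ∫⁻ ω, ENNReal.ofReal (Real.exp (g ω)) ∂μ :=
        lintegral_mono fun ω => ENNReal.ofReal_le_ofReal (key ω)

/-- A seller who draws a random price `P ~ F` (the distribution of the valuation `V`
itself, with continuous CDF `F`) obtains expected revenue `E[P·(1-F(P))]` at least
`(1/e)·exp(E[log V])`. -/
theorem stmt_5 {Ω : Type*} [MeasurableSpace Ω] (μ : Measure Ω) [IsProbabilityMeasure μ]
    (V : Ω → ℝ) (hV : Measurable V) (hpos : ∀ᵐ ω ∂μ, 0 < V ω)
    (F : ℝ → ℝ) (hF : ∀ p, F p = (μ {ω | V ω ≤ p}).toReal) (hcont : Continuous F)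
    (hint : Integrable (fun ω => Real.log (V ω)) μ) :
    ENNReal.ofReal ((1 / Real.exp 1) * Real.exp (∫ ω, Real.log (V ω) ∂μ)) ≤
      ∫⁻ ω, ENNReal.ofReal (V ω * (1 - F (V ω))) ∂μ := by
  -- Basic facts about F
  have hF01 : ∀ p, 0 ≤ F p ∧ F p ≤ 1 := by
    intro p
    rw [hF p]
    constructor
    · exact ENNReal.toReal_nonneg
    · have : μ {ω | V ω ≤ p} ≤ 1 := prob_le_one
      simpa using ENNReal.toReal_mono (by simp) this
  have hFmono : Monotone F := by
    intro a b hab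
    rw [hF a, hF b]
    apply ENNReal.toReal_mono (measure_ne_top _ _)
    exact measure_mono fun ω (h : V ω ≤ a) => le_trans h hab
  have hFmeas : Measurable fun ω => F (V ω) := hcont.measurable.comp hV
  -- Key bound: for 0 < s < 1, μ {F(V) > s} ≤ 1 - s
  have key : ∀ s : ℝ, 0 < s → s < 1 → μ {ω | s < F (V ω)} ≤ ENNReal.ofReal (1 - s) := by
    intro s hs0 hs1
    -- find a with F a ≤ s
    have ha : ∃ a : ℕ, F (-(a : ℝ)) ≤ s := by
      by_contra hcon
      push_neg at hcon
      have hinter : ⋂ n : ℕ, {ω | V ω ≤ -(n : ℝ)} = ∅ := by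
        ext ω
        simp only [mem_iInter, mem_setOf_eq, mem_empty_iff_false, iff_false, not_forall]
        obtain ⟨n, hn⟩ := exists_nat_gt (-(V ω))
        exact ⟨n, by push_neg; linarith⟩
      have hanti : Antitone fun n : ℕ => {ω | V ω ≤ -(n : ℝ)} := by
        intro n m hnm ω (h : V ω ≤ -(m : ℝ))
        exact le_trans h (by simp; exact_mod_cast hnm)
      have hns : ∀ n : ℕ, MeasureTheory.NullMeasurableSet {ω | V ω ≤ -(n : ℝ)} μ :=
        fun n => (hV measurableSet_Iic).nullMeasurableSet
      have htend := tendsto_measure_iInter_atTop (μ := μ) hns hanti ⟨0, measure_ne_top _ _⟩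
      rw [hinter] at htend
      simp only [measure_empty] at htend
      have hlt : ∀ᶠ n : ℕ in Filter.atTop, (μ {ω | V ω ≤ -(n : ℝ)}) < ENNReal.ofReal s := by
        apply htend.eventually_lt_const
        simpa using hs0
      obtain ⟨n, hn⟩ := hlt.exists
      have : F (-(n : ℝ)) ≤ s := by
        rw [hF]
        calc (μ {ω | V ω ≤ -(n : ℝ)}).toReal ≤ (ENNReal.ofReal s).toReal :=
              ENNReal.toReal_mono (by simp) hn.le
          _ = s := ENNReal.toReal_ofReal hs0.le
      exact absurd this (not_le.mpr (hcon n))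
    -- find b with s ≤ F b
    have hb : ∃ b : ℕ, s ≤ F (b : ℝ) := by
      by_contra hcon
      push_neg at hcon
      have hunion : ⋃ n : ℕ, {ω | V ω ≤ (n : ℝ)} = univ := by
        ext ω
        simp only [mem_iUnion, mem_setOf_eq, mem_univ, iff_true]
        obtain ⟨n, hn⟩ := exists_nat_gt (V ω)
        exact ⟨n, hn.le⟩
      have hmono : Monotone fun n : ℕ => {ω | V ω ≤ (n : ℝ)} := by
        intro n m hnm ω (h : V ω ≤ (n : ℝ))
        exact le_trans h (by exact_mod_cast hnm)
      have htend := tendsto_measure_iUnion_atTop (μ := μ) hmono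
      rw [hunion] at htend
      simp only [measure_univ] at htend
      have hlt : ∀ᶠ n : ℕ in Filter.atTop, ENNReal.ofReal s < μ {ω | V ω ≤ (n : ℝ)} := by
        apply htend.eventually_const_lt
        exact ENNReal.ofReal_lt_one.mpr hs1
      obtain ⟨n, hn⟩ := hlt.exists
      have : s ≤ F (n : ℝ) := by
        rw [hF]
        calc s = (ENNReal.ofReal s).toReal := (ENNReal.toReal_ofReal hs0.le).symm
          _ ≤ (μ {ω | V ω ≤ (n : ℝ)}).toReal := ENNReal.toReal_mono (measure_ne_top _ _) hn.le
      exact absurd this (not_le.mpr (hcon n))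
    obtain ⟨a, ha⟩ := ha
    obtain ⟨b, hb⟩ := hb
    have hab : -(a : ℝ) ≤ (b : ℝ) :=
      le_trans (neg_nonpos.mpr (Nat.cast_nonneg a)) (Nat.cast_nonneg b)
    -- IVT: find q with F q = s
    have hIVT : s ∈ F '' (Icc (-(a : ℝ)) b) :=
      intermediate_value_Icc hab hcont.continuousOn ⟨ha, hb⟩
    obtain ⟨q, _, hq⟩ := hIVT
    have hsub : {ω | s < F (V ω)} ⊆ {ω | q < V ω} := by
      intro ω hω
      simp only [mem_setOf_eq] at hω ⊢
      by_contra hc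
      push_neg at hc
      have : F (V ω) ≤ s := hq ▸ hFmono hc
      exact absurd hω (not_lt.mpr this)
    calc μ {ω | s < F (V ω)} ≤ μ {ω | q < V ω} := measure_mono hsub
      _ = 1 - μ {ω | V ω ≤ q} := by
          have hms : MeasurableSet {ω | V ω ≤ q} := hV measurableSet_Iic
          have hst : {ω | q < V ω} = {ω | V ω ≤ q}ᶜ := by ext ω; simp [not_le]
          rw [hst, measure_compl hms (measure_ne_top _ _), measure_univ]
      _ = 1 - ENNReal.ofReal s := by
          congr 1
          have := hF q
          rw [hq] at this
          rw [← ENNReal.ofReal_toReal (measure_ne_top μ {ω | V ω ≤ q}), ← this]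
      _ ≤ ENNReal.ofReal (1 - s) := by
          rw [ENNReal.ofReal_sub 1 hs0.le]
          simp
  -- h = -log(1 - F(V)) is nonneg with lintegral ≤ 1
  set h : Ω → ℝ := fun ω => -Real.log (1 - F (V ω)) with hh
  have hhnn : ∀ ω, 0 ≤ h ω := by
    intro ω
    have h1 := (hF01 (V ω)).1
    have h2 := (hF01 (V ω)).2
    have : Real.log (1 - F (V ω)) ≤ 0 := Real.log_nonpos (by linarith) (by linarith)
    simp only [hh]; linarith
  have hhmeas : Measurable h := ((measurable_const.sub hFmeas).log).neg
  have hlayer : ∫⁻ ω, ENNReal.ofReal (h ω) ∂μ ≤ 1 := by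
    rw [lintegral_eq_lintegral_meas_lt μ (Filter.Eventually.of_forall hhnn)
      hhmeas.aemeasurable]
    have hbound : ∀ t ∈ Ioi (0 : ℝ), μ {ω | t < h ω} ≤ ENNReal.ofReal (Real.exp (-t)) := by
      intro t ht
      have ht' : (0 : ℝ) < t := ht
      have hsub : {ω | t < h ω} ⊆ {ω | 1 - Real.exp (-t) < F (V ω)} := by
        intro ω (hω : t < -Real.log (1 - F (V ω)))
        have h1 := (hF01 (V ω)).1
        have h2 := (hF01 (V ω)).2
        simp only [mem_setOf_eq]
        rcases eq_or_lt_of_le (by linarith : (0:ℝ) ≤ 1 - F (V ω)) with heq | hlt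
        · exfalso
          rw [← heq, Real.log_zero] at hω
          linarith
        · have : Real.log (1 - F (V ω)) < -t := by linarith
          have := (Real.log_lt_iff_lt_exp hlt).mp this
          -- this : 1 - F (V ω) < Real.exp (-t)
          linarith
      have hs0 : 0 < 1 - Real.exp (-t) := by
        have : Real.exp (-t) < 1 := Real.exp_lt_one_iff.mpr (by linarith)
        linarith
      have hs1 : 1 - Real.exp (-t) < 1 := by
        have := Real.exp_pos (-t); linarith
      calc μ {ω | t < h ω} ≤ μ {ω | 1 - Real.exp (-t) < F (V ω)} := measure_mono hsub
        _ ≤ ENNReal.ofReal (1 - (1 - Real.exp (-t))) := key _ hs0 hs1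
        _ = ENNReal.ofReal (Real.exp (-t)) := by ring_nf
    calc ∫⁻ t in Ioi (0:ℝ), μ {ω | t < h ω}
        ≤ ∫⁻ t in Ioi (0:ℝ), ENNReal.ofReal (Real.exp (-t)) := by
          apply setLIntegral_mono' measurableSet_Ioi hbound
      _ = ENNReal.ofReal (∫ t in Ioi (0:ℝ), Real.exp (-t)) := by
          have hi : IntegrableOn (fun t : ℝ => Real.exp (-t)) (Ioi 0) := by
            simpa using exp_neg_integrableOn_Ioi 0 one_pos
          rw [ofReal_integral_eq_lintegral_ofReal hi
            (Filter.Eventually.of_forall fun t => (Real.exp_pos _).le)]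
      _ = 1 := by rw [integral_exp_neg_Ioi_zero]; simp
  -- h is integrable with ∫ h ≤ 1
  have hhint : Integrable h μ := by
    refine ⟨hhmeas.aestronglyMeasurable, ?_⟩
    rw [hasFiniteIntegral_iff_norm]
    have : ∀ ω, ENNReal.ofReal ‖h ω‖ = ENNReal.ofReal (h ω) := by
      intro ω; rw [Real.norm_of_nonneg (hhnn ω)]
    simp_rw [this]
    exact lt_of_le_of_lt hlayer (by norm_num)
  have hhle : ∫ ω, h ω ∂μ ≤ 1 := by
    rw [integral_eq_lintegral_of_nonneg_ae (Filter.Eventually.of_forall hhnn)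
      hhmeas.aestronglyMeasurable]
    calc (∫⁻ ω, ENNReal.ofReal (h ω) ∂μ).toReal ≤ (1 : ENNReal).toReal :=
        ENNReal.toReal_mono (by norm_num) hlayer
      _ = 1 := by simp
  -- μ {F(V) = 1} = 0
  have hFV1 : ∀ᵐ ω ∂μ, F (V ω) < 1 := by
    have hnull : μ {ω | ¬ F (V ω) < 1} = 0 := by
      have hsub : ∀ n : ℕ, {ω | ¬ F (V ω) < 1} ⊆ {ω | 1 - 1/(n+2 : ℝ) < F (V ω)} := by
        intro n ω hω
        simp only [mem_setOf_eq, not_lt] at hω ⊢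
        have : (0:ℝ) < 1/(n+2 : ℝ) := by positivity
        linarith
      have hb : ∀ n : ℕ, μ {ω | ¬ F (V ω) < 1} ≤ ENNReal.ofReal (1/(n+2 : ℝ)) := by
        intro n
        have h0 : (0:ℝ) < 1 - 1/(n+2 : ℝ) := by
          rw [sub_pos, div_lt_one (by positivity)]
          have := Nat.cast_nonneg (α := ℝ) n
          linarith
        have h1 : 1 - 1/(n+2 : ℝ) < 1 := by
          have : (0:ℝ) < 1/(n+2 : ℝ) := by positivity
          linarith
        calc μ {ω | ¬ F (V ω) < 1} ≤ μ {ω | 1 - 1/(n+2 : ℝ) < F (V ω)} :=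
            measure_mono (hsub n)
          _ ≤ ENNReal.ofReal (1 - (1 - 1/(n+2 : ℝ))) := key _ h0 h1
          _ = ENNReal.ofReal (1/(n+2 : ℝ)) := by ring_nf
      have htend : Filter.Tendsto (fun n : ℕ => ENNReal.ofReal (1/(n+2 : ℝ)))
          Filter.atTop (nhds 0) := by
        rw [← ENNReal.ofReal_zero]
        apply ENNReal.tendsto_ofReal
        apply Filter.Tendsto.div_atTop tendsto_const_nhds
        apply Filter.tendsto_atTop_add_const_right
        exact tendsto_natCast_atTop_atTop
      exact le_antisymm (ge_of_tendsto' htend hb) zero_le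
    exact hnull
  -- assemble
  set g : Ω → ℝ := fun ω => Real.log (V ω) - h ω with hg
  have hgint : Integrable g μ := by exact hint.sub hhint
  have hgeq : ∀ᵐ ω ∂μ, Real.exp (g ω) = V ω * (1 - F (V ω)) := by
    filter_upwards [hpos, hFV1] with ω h1 h2
    have hlt : 0 < 1 - F (V ω) := by linarith
    simp only [hg, hh, sub_neg_eq_add, Real.exp_add, Real.exp_log h1, Real.exp_log hlt]
  have hjen := jensen_exp μ g hgint
  have hintg : ∫ ω, g ω ∂μ = ∫ ω, Real.log (V ω) ∂μ - ∫ ω, h ω ∂μ := by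
    exact integral_sub hint hhint
  calc ENNReal.ofReal ((1 / Real.exp 1) * Real.exp (∫ ω, Real.log (V ω) ∂μ))
      = ENNReal.ofReal (Real.exp (∫ ω, Real.log (V ω) ∂μ - 1)) := by
        rw [Real.exp_sub]; congr 1; ring
    _ ≤ ENNReal.ofReal (Real.exp (∫ ω, g ω ∂μ)) := by
        apply ENNReal.ofReal_le_ofReal
        apply Real.exp_le_exp.mpr
        rw [hintg]; linarith
    _ ≤ ∫⁻ ω, ENNReal.ofReal (Real.exp (g ω)) ∂μ := hjen
    _ = ∫⁻ ω, ENNReal.ofReal (V ω * (1 - F (V ω))) ∂μ := by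
        apply lintegral_congr_ae
        filter_upwards [hgeq] with ω hω
        rw [hω]
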